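/- Let C_∞ and C_n (n ≥ 1) be bivariate copulas on [0,1]^2, with C_∞ continuous, and suppose C_n converges weakly to C_∞. Then ∫_{[0,1]^2} C_n(u−, v−) dC_n(u,v) → ∫_{[0,1]^2} C_∞(u,v) dC_∞(u,v) as n → ∞. -/

import Mathlib

open MeasureTheory Filter Set

noncomputable section

/-- A (bivariate) copula, viewed as a probability measure `ν` on `ℝ × ℝ` carried by `[0,1]²`
whose two one-dimensional marginals are uniform on `[0,1]`. -/
def IsCopulaMeasure (ν : Measure (ℝ × ℝ)) : Prop :=
  IsProbabilityMeasure ν ∧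
  ν ((Set.Icc (0 : ℝ) 1 ×ˢ Set.Icc (0 : ℝ) 1)ᶜ) = 0 ∧
  Measure.map Prod.fst ν = volume.restrict (Set.Icc (0 : ℝ) 1) ∧
  Measure.map Prod.snd ν = volume.restrict (Set.Icc (0 : ℝ) 1)

/-- The distribution function `C(u,v) = ν((-∞,u] × (-∞,v])` of a copula measure `ν`. -/
def copulaCDF (ν : Measure (ℝ × ℝ)) (p : ℝ × ℝ) : ℝ :=
  (ν (Set.Iic p.1 ×ˢ Set.Iic p.2)).toReal

/-- The left limit `C(u-,v-) = ν((-∞,u) × (-∞,v))` of the distribution function of a copula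
measure `ν`. -/
def copulaCDFLeft (ν : Measure (ℝ × ℝ)) (p : ℝ × ℝ) : ℝ :=
  (ν (Set.Iio p.1 ×ˢ Set.Iio p.2)).toReal

open Topology

variable {ν : Measure (ℝ × ℝ)}

lemma marg_fst (hν : IsCopulaMeasure ν) {s : Set ℝ} (hs : MeasurableSet s) :
    ν (s ×ˢ (univ : Set ℝ)) = volume.restrict (Icc (0:ℝ) 1) s := by
  rw [prod_univ, ← Measure.map_apply measurable_fst hs, hν.2.2.1]

lemma marg_snd (hν : IsCopulaMeasure ν) {s : Set ℝ} (hs : MeasurableSet s) :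
    ν ((univ : Set ℝ) ×ˢ s) = volume.restrict (Icc (0:ℝ) 1) s := by
  rw [univ_prod, ← Measure.map_apply measurable_snd hs, hν.2.2.2]

lemma cdf_nonneg (p : ℝ × ℝ) : 0 ≤ copulaCDF ν p := ENNReal.toReal_nonneg

lemma cdf_le_one (hν : IsCopulaMeasure ν) (p : ℝ × ℝ) : copulaCDF ν p ≤ 1 := by
  have := hν.1
  exact ENNReal.toReal_le_of_le_ofReal zero_le_one (by simpa using prob_le_one)

lemma cdfLeft_nonneg (p : ℝ × ℝ) : 0 ≤ copulaCDFLeft ν p := ENNReal.toReal_nonneg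

lemma cdfLeft_le_one (hν : IsCopulaMeasure ν) (p : ℝ × ℝ) : copulaCDFLeft ν p ≤ 1 := by
  have := hν.1
  exact ENNReal.toReal_le_of_le_ofReal zero_le_one (by simpa using prob_le_one)

-- increment in the first coordinate
lemma cdf_fst_incr (hν : IsCopulaMeasure ν) {u u' : ℝ} (h : u ≤ u') (v : ℝ) :
    copulaCDF ν (u', v) - copulaCDF ν (u, v) ∈ Set.Icc 0 (u' - u) := by
  have := hν.1
  have hsplit : Iic u' ×ˢ Iic v = (Iic u ×ˢ Iic v) ∪ (Ioc u u' ×ˢ Iic v) := by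
    rw [← union_prod, Iic_union_Ioc_eq_Iic h]
  have hdisj : Disjoint (Iic u ×ˢ Iic v) (Ioc u u' ×ˢ Iic v) := by
    apply Set.disjoint_left.2
    rintro ⟨x, y⟩ ⟨hx, -⟩ ⟨hx', -⟩
    exact absurd hx (not_le.2 hx'.1)
  have hmeas : ν (Iic u' ×ˢ Iic v) = ν (Iic u ×ˢ Iic v) + ν (Ioc u u' ×ˢ Iic v) := by
    rw [hsplit, measure_union hdisj ((measurableSet_Ioc).prod measurableSet_Iic)]
  have hb : ν (Ioc u u' ×ˢ Iic v) ≤ ENNReal.ofReal (u' - u) := by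
    calc ν (Ioc u u' ×ˢ Iic v) ≤ ν (Ioc u u' ×ˢ univ) :=
          measure_mono (prod_mono le_rfl (subset_univ _))
      _ = volume.restrict (Icc (0:ℝ) 1) (Ioc u u') := marg_fst hν measurableSet_Ioc
      _ ≤ volume (Ioc u u') := Measure.restrict_le_self _
      _ = ENNReal.ofReal (u' - u) := Real.volume_Ioc
  constructor
  · simp only [copulaCDF, sub_nonneg]
    exact ENNReal.toReal_le_toReal (measure_ne_top _ _) (measure_ne_top _ _) |>.2
      (measure_mono (prod_mono (Iic_subset_Iic.2 h) le_rfl))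
  · have h1 : copulaCDF ν (u', v) = copulaCDF ν (u, v) + (ν (Ioc u u' ×ˢ Iic v)).toReal := by
      simp only [copulaCDF]
      rw [hmeas, ENNReal.toReal_add (measure_ne_top _ _) (measure_ne_top _ _)]
    rw [h1]
    simp only [add_sub_cancel_left]
    calc (ν (Ioc u u' ×ˢ Iic v)).toReal ≤ (ENNReal.ofReal (u' - u)).toReal :=
          ENNReal.toReal_mono ENNReal.ofReal_ne_top hb
      _ ≤ u' - u := (ENNReal.toReal_ofReal (by linarith)).le

lemma cdf_snd_incr (hν : IsCopulaMeasure ν) {v v' : ℝ} (h : v ≤ v') (u : ℝ) :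
    copulaCDF ν (u, v') - copulaCDF ν (u, v) ∈ Set.Icc 0 (v' - v) := by
  have := hν.1
  have hsplit : Iic u ×ˢ Iic v' = (Iic u ×ˢ Iic v) ∪ (Iic u ×ˢ Ioc v v') := by
    rw [← prod_union, Iic_union_Ioc_eq_Iic h]
  have hdisj : Disjoint (Iic u ×ˢ Iic v) (Iic u ×ˢ Ioc v v') := by
    apply Set.disjoint_left.2
    rintro ⟨x, y⟩ ⟨-, hy⟩ ⟨-, hy'⟩
    exact absurd hy (not_le.2 hy'.1)
  have hmeas : ν (Iic u ×ˢ Iic v') = ν (Iic u ×ˢ Iic v) + ν (Iic u ×ˢ Ioc v v') := by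
    rw [hsplit, measure_union hdisj (measurableSet_Iic.prod measurableSet_Ioc)]
  have hb : ν (Iic u ×ˢ Ioc v v') ≤ ENNReal.ofReal (v' - v) := by
    calc ν (Iic u ×ˢ Ioc v v') ≤ ν (univ ×ˢ Ioc v v') :=
          measure_mono (prod_mono (subset_univ _) le_rfl)
      _ = volume.restrict (Icc (0:ℝ) 1) (Ioc v v') := marg_snd hν measurableSet_Ioc
      _ ≤ volume (Ioc v v') := Measure.restrict_le_self _
      _ = ENNReal.ofReal (v' - v) := Real.volume_Ioc
  constructor
  · simp only [copulaCDF, sub_nonneg]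
    exact ENNReal.toReal_le_toReal (measure_ne_top _ _) (measure_ne_top _ _) |>.2
      (measure_mono (prod_mono le_rfl (Iic_subset_Iic.2 h)))
  · have h1 : copulaCDF ν (u, v') = copulaCDF ν (u, v) + (ν (Iic u ×ˢ Ioc v v')).toReal := by
      simp only [copulaCDF]
      rw [hmeas, ENNReal.toReal_add (measure_ne_top _ _) (measure_ne_top _ _)]
    rw [h1]
    simp only [add_sub_cancel_left]
    calc (ν (Iic u ×ˢ Ioc v v')).toReal ≤ (ENNReal.ofReal (v' - v)).toReal :=
          ENNReal.toReal_mono ENNReal.ofReal_ne_top hb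
      _ ≤ v' - v := (ENNReal.toReal_ofReal (by linarith)).le

lemma cdf_lip (hν : IsCopulaMeasure ν) (p q : ℝ × ℝ) :
    |copulaCDF ν p - copulaCDF ν q| ≤ |p.1 - q.1| + |p.2 - q.2| := by
  have h1 : ∀ u u' v : ℝ, |copulaCDF ν (u', v) - copulaCDF ν (u, v)| ≤ |u' - u| := by
    intro u u' v
    rcases le_total u u' with h | h
    · have := cdf_fst_incr hν h v
      rw [abs_of_nonneg this.1, abs_of_nonneg (by linarith)]
      exact this.2
    · have := cdf_fst_incr hν h v
      rw [abs_sub_comm, abs_of_nonneg this.1, abs_of_nonpos (by linarith)]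
      linarith [this.2]
  have h2 : ∀ v v' u : ℝ, |copulaCDF ν (u, v') - copulaCDF ν (u, v)| ≤ |v' - v| := by
    intro v v' u
    rcases le_total v v' with h | h
    · have := cdf_snd_incr hν h u
      rw [abs_of_nonneg this.1, abs_of_nonneg (by linarith)]
      exact this.2
    · have := cdf_snd_incr hν h u
      rw [abs_sub_comm, abs_of_nonneg this.1, abs_of_nonpos (by linarith)]
      linarith [this.2]
  calc |copulaCDF ν p - copulaCDF ν q|
      ≤ |copulaCDF ν (p.1, p.2) - copulaCDF ν (q.1, p.2)| +
        |copulaCDF ν (q.1, p.2) - copulaCDF ν (q.1, q.2)| := by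
        rw [show (p.1, p.2) = p from rfl, show (q.1, q.2) = q from rfl]
        exact abs_sub_le _ _ _
    _ ≤ |p.1 - q.1| + |p.2 - q.2| := add_le_add (h1 q.1 p.1 p.2) (h2 q.2 p.2 q.1)

lemma cdf_continuous (hν : IsCopulaMeasure ν) : Continuous (copulaCDF ν) := by
  apply (LipschitzWith.of_dist_le_mul (K := 2) ?_).continuous
  intro p q
  rw [Real.dist_eq]
  calc |copulaCDF ν p - copulaCDF ν q| ≤ |p.1 - q.1| + |p.2 - q.2| := cdf_lip hν p q
    _ ≤ dist p q + dist p q := by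
        rw [Prod.dist_eq]
        exact add_le_add (le_max_left _ _) ((Real.dist_eq _ _) ▸ le_max_right _ _)
    _ = 2 * dist p q := by ring

lemma cdfLeft_le_cdf (hν : IsCopulaMeasure ν) (p : ℝ × ℝ) : copulaCDFLeft ν p ≤ copulaCDF ν p :=
  haveI := hν.1
  ENNReal.toReal_mono (measure_ne_top _ _)
    (measure_mono (prod_mono Iio_subset_Iic_self Iio_subset_Iic_self))

lemma cdf_le_cdfLeft (hν : IsCopulaMeasure ν) {δ : ℝ} (hδ : 0 < δ) (p : ℝ × ℝ) :
    copulaCDF ν (p.1 - δ, p.2 - δ) ≤ copulaCDFLeft ν p :=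
  haveI := hν.1
  ENNReal.toReal_mono (measure_ne_top _ _)
    (measure_mono (prod_mono (Iic_subset_Iio.2 (show p.1 - δ < p.1 by linarith)) (Iic_subset_Iio.2 (show p.2 - δ < p.2 by linarith))))

lemma cdfLeft_tendsto (hν : IsCopulaMeasure ν) (p : ℝ × ℝ) :
    Tendsto (fun k : ℕ => copulaCDF ν (p.1 - 1 / (k + 1), p.2 - 1 / (k + 1))) atTop
      (𝓝 (copulaCDFLeft ν p)) := by
  have hU : ⋃ k : ℕ, (Iic (p.1 - 1 / (k + 1)) ×ˢ Iic (p.2 - 1 / (k + 1))) =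
      Iio p.1 ×ˢ Iio p.2 := by
    ext ⟨x, y⟩
    simp only [mem_iUnion, mem_prod, mem_Iic, mem_Iio]
    constructor
    · rintro ⟨k, hx, hy⟩
      have hk : (0:ℝ) < 1 / (k + 1) := by positivity
      exact ⟨by linarith, by linarith⟩
    · rintro ⟨hx, hy⟩
      obtain ⟨k, hk⟩ := exists_nat_one_div_lt (show (0:ℝ) < min (p.1 - x) (p.2 - y) by
        simp [sub_pos, hx, hy])
      exact ⟨k, by
        have h1 := lt_of_lt_of_le hk (min_le_left _ _)
        have h2 := lt_of_lt_of_le hk (min_le_right _ _)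
        constructor <;> [linarith; linarith]⟩
  have hmono : Monotone (fun k : ℕ => Iic (p.1 - 1 / (k + 1)) ×ˢ Iic (p.2 - 1 / (k + 1))) := by
    intro k m hkm
    have : (1:ℝ) / (m + 1) ≤ 1 / (k + 1) := by
      apply one_div_le_one_div_of_le (by positivity)
      exact_mod_cast by omega
    exact prod_mono (Iic_subset_Iic.2 (by linarith)) (Iic_subset_Iic.2 (by linarith))
  haveI := hν.1
  have := tendsto_measure_iUnion_atTop (μ := ν) hmono
  rw [hU] at this
  exact (ENNReal.tendsto_toReal (measure_ne_top _ _)).comp this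

lemma cdfLeft_measurable (hν : IsCopulaMeasure ν) : Measurable (copulaCDFLeft ν) := by
  apply measurable_of_tendsto_metrizable
    (f := fun k : ℕ => fun p : ℝ × ℝ => copulaCDF ν (p.1 - 1 / (k + 1), p.2 - 1 / (k + 1)))
  · intro k
    exact ((cdf_continuous hν).comp (by fun_prop)).measurable
  · rw [tendsto_pi_nhds]
    intro p
    exact cdfLeft_tendsto hν p

lemma frontier_null (hν : IsCopulaMeasure ν) (a b : ℝ) :
    ν (frontier (Iic a ×ˢ Iic b)) = 0 := by
  rw [frontier_prod_eq, closure_Iic, frontier_Iic, frontier_Iic]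
  apply measure_union_null
  · apply le_antisymm _ zero_le
    calc ν (Iic a ×ˢ {b}) ≤ ν (univ ×ˢ {b}) :=
        measure_mono (prod_mono (subset_univ _) le_rfl)
      _ = volume.restrict (Icc (0:ℝ) 1) {b} := marg_snd hν (measurableSet_singleton b)
      _ ≤ volume {b} := Measure.restrict_le_self _
      _ = 0 := Real.volume_singleton
  · rw [closure_Iic]
    apply le_antisymm _ zero_le
    calc ν ({a} ×ˢ Iic b) ≤ ν ({a} ×ˢ univ) :=
        measure_mono (prod_mono le_rfl (subset_univ _))
      _ = volume.restrict (Icc (0:ℝ) 1) {a} := marg_fst hν (measurableSet_singleton a)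
      _ ≤ volume {a} := Measure.restrict_le_self _
      _ = 0 := Real.volume_singleton

lemma cdf_pointwise_tendsto (ν : ℕ → Measure (ℝ × ℝ)) (νlim : Measure (ℝ × ℝ))
    (hν : ∀ n, IsCopulaMeasure (ν n)) (hνlim : IsCopulaMeasure νlim)
    (hweak : ∀ f : BoundedContinuousFunction (ℝ × ℝ) ℝ,
      Tendsto (fun n => ∫ p, f p ∂(ν n)) atTop (nhds (∫ p, f p ∂νlim)))
    (p : ℝ × ℝ) :
    Tendsto (fun n => copulaCDF (ν n) p) atTop (𝓝 (copulaCDF νlim p)) := by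
  haveI := fun n => (hν n).1
  haveI := hνlim.1
  set P : ℕ → ProbabilityMeasure (ℝ × ℝ) := fun n => ⟨ν n, (hν n).1⟩
  set Plim : ProbabilityMeasure (ℝ × ℝ) := ⟨νlim, hνlim.1⟩
  have hP : Tendsto P atTop (𝓝 Plim) := by
    rw [ProbabilityMeasure.tendsto_iff_forall_integral_tendsto]
    exact hweak
  have key := ProbabilityMeasure.tendsto_measure_of_null_frontier_of_tendsto' hP
    (E := Iic p.1 ×ˢ Iic p.2) (frontier_null hνlim p.1 p.2)
  exact (ENNReal.tendsto_toReal (measure_ne_top _ _)).comp key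

lemma cdf_uniform_tendsto (ν : ℕ → Measure (ℝ × ℝ)) (νlim : Measure (ℝ × ℝ))
    (hν : ∀ n, IsCopulaMeasure (ν n)) (hνlim : IsCopulaMeasure νlim)
    (hweak : ∀ f : BoundedContinuousFunction (ℝ × ℝ) ℝ,
      Tendsto (fun n => ∫ p, f p ∂(ν n)) atTop (nhds (∫ p, f p ∂νlim)))
    {K : Set (ℝ × ℝ)} (hK : IsCompact K) {ε : ℝ} (hε : 0 < ε) :
    ∀ᶠ n in atTop, ∀ p ∈ K, |copulaCDF (ν n) p - copulaCDF νlim p| ≤ ε := by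
  -- cover K by balls of radius ε/8
  have hcover : K ⊆ ⋃ q : ℝ × ℝ, Metric.ball q (ε / 8) := fun p _ =>
    mem_iUnion.2 ⟨p, Metric.mem_ball_self (by linarith)⟩
  obtain ⟨t, ht⟩ := hK.elim_finite_subcover (fun q : ℝ × ℝ => Metric.ball q (ε / 8))
    (fun q => Metric.isOpen_ball) hcover
  -- eventually close at each point of t
  have hev : ∀ᶠ n in atTop, ∀ q ∈ t, |copulaCDF (ν n) q - copulaCDF νlim q| ≤ ε / 2 := by
    rw [eventually_all_finset]
    intro q _
    have := cdf_pointwise_tendsto ν νlim hν hνlim hweak q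
    have h2 := Metric.tendsto_atTop.1 this (ε / 2) (by linarith)
    obtain ⟨N, hN⟩ := h2
    exact eventually_atTop.2 ⟨N, fun n hn => by
      have := hN n hn; rw [Real.dist_eq] at this; linarith⟩
  filter_upwards [hev] with n hn
  intro p hp
  obtain ⟨q, hq, hpq⟩ := mem_iUnion₂.1 (ht hp)
  have hd : dist p q < ε / 8 := Metric.mem_ball.1 hpq
  have hlip1 : |copulaCDF (ν n) p - copulaCDF (ν n) q| ≤ ε / 4 := by
    have := cdf_lip (hν n) p q
    have h1 : |p.1 - q.1| ≤ dist p q := by rw [Prod.dist_eq]; exact le_max_left _ _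
    have h2 : |p.2 - q.2| ≤ dist p q := by rw [Prod.dist_eq]; exact le_max_right _ _
    calc |copulaCDF (ν n) p - copulaCDF (ν n) q| ≤ |p.1 - q.1| + |p.2 - q.2| := this
      _ ≤ dist p q + dist p q := add_le_add h1 h2
      _ ≤ ε / 4 := by linarith
  have hlip2 : |copulaCDF νlim q - copulaCDF νlim p| ≤ ε / 4 := by
    have := cdf_lip hνlim q p
    have h1 : |q.1 - p.1| ≤ dist p q := by
      rw [Prod.dist_eq, abs_sub_comm]; exact le_max_left _ _
    have h2 : |q.2 - p.2| ≤ dist p q := by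
      rw [Prod.dist_eq, abs_sub_comm]; exact le_max_right _ _
    calc |copulaCDF νlim q - copulaCDF νlim p| ≤ |q.1 - p.1| + |q.2 - p.2| := this
      _ ≤ dist p q + dist p q := add_le_add h1 h2
      _ ≤ ε / 4 := by linarith
  have := hn q hq
  calc |copulaCDF (ν n) p - copulaCDF νlim p|
      ≤ |copulaCDF (ν n) p - copulaCDF (ν n) q| + |copulaCDF (ν n) q - copulaCDF νlim q| +
        |copulaCDF νlim q - copulaCDF νlim p| := by
          have := abs_sub_le (copulaCDF (ν n) p) (copulaCDF (ν n) q) (copulaCDF νlim p)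
          have h2 := abs_sub_le (copulaCDF (ν n) q) (copulaCDF νlim q) (copulaCDF νlim p)
          linarith
    _ ≤ ε / 4 + ε / 2 + ε / 4 := by gcongr
    _ = ε := by ring

/-- Lemma 2.6: if copulas `C_n` converge weakly to a continuous copula `C_∞`, then
`∫ C_n(u-,v-) dC_n(u,v) → ∫ C_∞(u,v) dC_∞(u,v)`. -/
theorem copula_integral_convergence
    (ν : ℕ → Measure (ℝ × ℝ)) (νlim : Measure (ℝ × ℝ))
    (hν : ∀ n, IsCopulaMeasure (ν n)) (hνlim : IsCopulaMeasure νlim)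
    (hcont : Continuous (copulaCDF νlim))
    (hweak : ∀ f : BoundedContinuousFunction (ℝ × ℝ) ℝ,
      Tendsto (fun n => ∫ p, f p ∂(ν n)) atTop (nhds (∫ p, f p ∂νlim))) :
    Tendsto (fun n => ∫ p, copulaCDFLeft (ν n) p ∂(ν n)) atTop
      (nhds (∫ p, copulaCDF νlim p ∂νlim)) := by
  haveI := fun n => (hν n).1
  haveI := hνlim.1
  set a : ℕ → ℝ := fun n => ∫ p, copulaCDFLeft (ν n) p ∂(ν n) with ha
  set b : ℕ → ℝ := fun n => ∫ p, copulaCDF νlim p ∂(ν n) with hb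
  set L : ℝ := ∫ p, copulaCDF νlim p ∂νlim with hL
  -- b → L via weak convergence
  have hnorm : ∀ x, ‖copulaCDF νlim x‖ ≤ 1 := fun x => by
    rw [Real.norm_eq_abs, abs_le]
    exact ⟨by linarith [cdf_nonneg (ν := νlim) x], cdf_le_one hνlim x⟩
  have hbL : Tendsto b atTop (𝓝 L) := by
    have := hweak (BoundedContinuousFunction.ofNormedAddCommGroup (copulaCDF νlim)
      (cdf_continuous hνlim) 1 hnorm)
    simpa using this
  -- integrability
  have hint1 : ∀ n, Integrable (copulaCDFLeft (ν n)) (ν n) := fun n =>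
    (integrable_const (1:ℝ)).mono' (cdfLeft_measurable (hν n)).aestronglyMeasurable
      (Eventually.of_forall fun p => by
        rw [Real.norm_eq_abs, abs_le]
        exact ⟨by linarith [cdfLeft_nonneg (ν := ν n) p], cdfLeft_le_one (hν n) p⟩)
  have hint2 : ∀ n, Integrable (copulaCDF νlim) (ν n) := fun n =>
    (integrable_const (1:ℝ)).mono' (cdf_continuous hνlim).measurable.aestronglyMeasurable
      (Eventually.of_forall fun p => hnorm p)
  -- a - b → 0
  have hab : Tendsto (fun n => a n - b n) atTop (𝓝 0) := by
    rw [Metric.tendsto_atTop]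
    intro ε hε
    -- the compact set
    set K : Set (ℝ × ℝ) := Icc (-2:ℝ) 2 ×ˢ Icc (-2:ℝ) 2 with hKdef
    have hK : IsCompact K := isCompact_Icc.prod isCompact_Icc
    have huni := cdf_uniform_tendsto ν νlim hν hνlim hweak hK
      (show (0:ℝ) < ε/4 by linarith)
    obtain ⟨N, hN⟩ := eventually_atTop.1 huni
    refine ⟨N, fun n hn => ?_⟩
    set δ : ℝ := min (ε/16) 1 with hδdef
    have hδpos : 0 < δ := lt_min (by linarith) one_pos
    have hδ1 : δ ≤ 1 := min_le_right _ _
    have hδε : δ ≤ ε/16 := min_le_left _ _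
    -- pointwise a.e. bound
    have hae : ∀ᵐ p ∂(ν n), ‖copulaCDFLeft (ν n) p - copulaCDF νlim p‖ ≤ ε/2 := by
      have hmem : ∀ᵐ p ∂(ν n), p ∈ Icc (0:ℝ) 1 ×ˢ Icc (0:ℝ) 1 :=
        mem_ae_iff.2 (hν n).2.1
      filter_upwards [hmem] with p hp
      obtain ⟨⟨h01, h02⟩, ⟨h11, h12⟩⟩ := hp
      have hpK : p ∈ K := ⟨⟨by linarith, by linarith⟩, ⟨by linarith, by linarith⟩⟩
      have hpδK : (p.1 - δ, p.2 - δ) ∈ K :=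
        ⟨⟨by simp; linarith, by simp; linarith⟩, ⟨by simp; linarith, by simp; linarith⟩⟩
      have hb1 := hN n hn p hpK
      have hb2 := hN n hn (p.1 - δ, p.2 - δ) hpδK
      have hup : copulaCDFLeft (ν n) p - copulaCDF νlim p ≤ ε/2 := by
        have h1 := cdfLeft_le_cdf (hν n) p
        have := abs_le.1 hb1
        linarith [this.2]
      have hdown : copulaCDF νlim p - copulaCDFLeft (ν n) p ≤ ε/2 := by
        have h1 := cdf_le_cdfLeft (hν n) hδpos p
        have h2 : |copulaCDF νlim p - copulaCDF νlim (p.1 - δ, p.2 - δ)| ≤ 2*δ := by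
          have := cdf_lip hνlim p (p.1 - δ, p.2 - δ)
          have e1 : |p.1 - (p.1 - δ, p.2 - δ).1| = δ := by simp [abs_of_nonneg hδpos.le]
          have e2 : |p.2 - (p.1 - δ, p.2 - δ).2| = δ := by simp [abs_of_nonneg hδpos.le]
          rw [e1, e2] at this
          linarith
        have h3 := abs_le.1 hb2
        have h4 := abs_le.1 h2
        linarith [h3.2, h4.1, h4.2]
      rw [Real.norm_eq_abs, abs_le]
      exact ⟨by linarith, hup⟩
    have hbound : ‖a n - b n‖ ≤ ε/2 := by
      have : a n - b n = ∫ p, (copulaCDFLeft (ν n) p - copulaCDF νlim p) ∂(ν n) := by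
        rw [ha, hb, integral_sub (hint1 n) (hint2 n)]
      rw [this]
      calc ‖∫ p, (copulaCDFLeft (ν n) p - copulaCDF νlim p) ∂(ν n)‖
          ≤ ε/2 * ((ν n) univ).toReal := norm_integral_le_of_norm_le_const hae
        _ = ε/2 := by simp
    rw [Real.dist_eq, sub_zero]
    calc |a n - b n| = ‖a n - b n‖ := (Real.norm_eq_abs _).symm
      _ ≤ ε/2 := hbound
      _ < ε := by linarith
  have : Tendsto (fun n => (a n - b n) + b n) atTop (𝓝 (0 + L)) := hab.add hbL
  simpa using this
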